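/- arXiv:math/0411470 — 3 statements merged into one kernel-verified Lean document; each statement's English description precedes it below -/
import Mathlib

section
/- In a Garside monoid M there exists a unique Garside element Δ such that Δ ≤_L Δ' and Δ ≤_R Δ' for every Garside element Δ' of M (the minimal Garside element of M). -/
/-- `a` left-divides `b` in the monoid `M`. -/
def dvdL {M : Type*} [Monoid M] (a b : M) : Prop := ∃ c, a * c = b

/-- `a` right-divides `b` in the monoid `M`. -/
def dvdR {M : Type*} [Monoid M] (a b : M) : Prop := ∃ c, c * a = b

/-- `L(a)`, the set of left divisors of `a`. -/
def Lset {M : Type*} [Monoid M] (a : M) : Set M := {x | dvdL x a}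

/-- `R(a)`, the set of right divisors of `a`. -/
def Rset {M : Type*} [Monoid M] (a : M) : Set M := {x | dvdR x a}

/-- `a` is an atom: `a ≠ 1` and `a = b * c` implies `b = 1` or `c = 1`. -/
def IsAtomElt {M : Type*} [Monoid M] (a : M) : Prop :=
  a ≠ 1 ∧ ∀ b c : M, a = b * c → b = 1 ∨ c = 1

/-- `M` is atomic: every element is a finite product of atoms, and the lengths of
expressions of a given element as products of atoms are bounded above. -/
def Atomic (M : Type*) [Monoid M] : Prop :=
  (∀ a : M, ∃ l : List M, (∀ x ∈ l, IsAtomElt x) ∧ l.prod = a) ∧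
  (∀ a : M, ∃ N : ℕ, ∀ l : List M, (∀ x ∈ l, IsAtomElt x) → l.prod = a → l.length ≤ N)

/-- `Δ` is a Garside element: `L(Δ) = R(Δ)` and `L(Δ)` generates `M`. -/
def IsGarsideElt {M : Type*} [Monoid M] (Δ : M) : Prop :=
  Lset Δ = Rset Δ ∧ Submonoid.closure (Lset Δ) = ⊤

/-- `d` is a greatest common lower bound of `a` and `b` with respect to `≤_L`. -/
def IsGlbL {M : Type*} [Monoid M] (a b d : M) : Prop :=
  dvdL d a ∧ dvdL d b ∧ ∀ c : M, dvdL c a → dvdL c b → dvdL c d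

/-- `d` is a least common upper bound of `a` and `b` with respect to `≤_L`. -/
def IsLubL {M : Type*} [Monoid M] (a b d : M) : Prop :=
  dvdL a d ∧ dvdL b d ∧ ∀ c : M, dvdL a c → dvdL b c → dvdL d c

/-- `d` is a greatest common lower bound of `a` and `b` with respect to `≤_R`. -/
def IsGlbR {M : Type*} [Monoid M] (a b d : M) : Prop :=
  dvdR d a ∧ dvdR d b ∧ ∀ c : M, dvdR c a → dvdR c b → dvdR c d

/-- `d` is a least common upper bound of `a` and `b` with respect to `≤_R`. -/
def IsLubR {M : Type*} [Monoid M] (a b d : M) : Prop :=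
  dvdR a d ∧ dvdR b d ∧ ∀ c : M, dvdR a c → dvdR b c → dvdR d c

/-- `M` is a Garside monoid: finitely generated, left and right cancellative, atomic,
`≤_L`- and `≤_R`-lattice conditions, and it possesses a Garside element. -/
def IsGarsideMonoid (M : Type*) [Monoid M] : Prop :=
  (∃ S : Set M, S.Finite ∧ Submonoid.closure S = ⊤) ∧
  (∀ a b c : M, a * b = a * c → b = c) ∧
  (∀ a b c : M, b * a = c * a → b = c) ∧
  Atomic M ∧
  (∀ a b : M, ∃ d, IsGlbL a b d) ∧
  (∀ a b : M, ∃ d, IsLubL a b d) ∧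
  (∀ a b : M, ∃ d, IsGlbR a b d) ∧
  (∀ a b : M, ∃ d, IsLubR a b d) ∧
  (∃ Δ : M, IsGarsideElt Δ)

section Aux

variable {M : Type*} [Monoid M]

lemma dvdL_trans' {a b c : M} (h1 : dvdL a b) (h2 : dvdL b c) : dvdL a c := by
  obtain ⟨u, hu⟩ := h1; obtain ⟨v, hv⟩ := h2
  exact ⟨u * v, by rw [← mul_assoc, hu, hv]⟩

lemma dvdR_trans' {a b c : M} (h1 : dvdR a b) (h2 : dvdR b c) : dvdR a c := by
  obtain ⟨u, hu⟩ := h1; obtain ⟨v, hv⟩ := h2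
  exact ⟨v * u, by rw [mul_assoc, hu, hv]⟩

lemma exists_decomp_pow (u : M) (lu : List M) (hmem : ∀ x ∈ lu, IsAtomElt x)
    (hprod : lu.prod = u) (n : ℕ) :
    ∃ l : List M, (∀ x ∈ l, IsAtomElt x) ∧ l.prod = u ^ n ∧ l.length = n * lu.length := by
  induction n with
  | zero => exact ⟨[], by simp, by simp, by simp⟩
  | succ n ih =>
    obtain ⟨l, h1, h2, h3⟩ := ih
    refine ⟨lu ++ l, ?_, ?_, ?_⟩
    · intro x hx
      rcases List.mem_append.mp hx with hx | hx
      · exact hmem x hx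
      · exact h1 x hx
    · rw [List.prod_append, h2, hprod, pow_succ']
    · rw [List.length_append, h3]; ring

/-- Sandwich lemma: in an atomic monoid, `u * a * d = a` forces `u = 1` and `d = 1`. -/
lemma sandwich (hAt : Atomic M) {u a d : M} (h : u * a * d = a) : u = 1 ∧ d = 1 := by
  obtain ⟨hdec, hbnd⟩ := hAt
  have key : ∀ n : ℕ, u ^ n * a * d ^ n = a := by
    intro n
    induction n with
    | zero => simp
    | succ n ih =>
      calc u ^ (n + 1) * a * d ^ (n + 1) = u * (u ^ n * a * d ^ n) * d := by
            rw [pow_succ', pow_succ]; simp only [mul_assoc]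
        _ = a := by rw [ih, h]
  obtain ⟨lu, hlu, hpu⟩ := hdec u
  obtain ⟨la, hla, hpa⟩ := hdec a
  obtain ⟨ld, hld, hpd⟩ := hdec d
  obtain ⟨N, hN⟩ := hbnd a
  have hlen : ∀ n : ℕ, n * lu.length + la.length + n * ld.length ≤ N := by
    intro n
    obtain ⟨l1, h1, p1, q1⟩ := exists_decomp_pow u lu hlu hpu n
    obtain ⟨l2, h2, p2, q2⟩ := exists_decomp_pow d ld hld hpd n
    have hmem : ∀ x ∈ l1 ++ la ++ l2, IsAtomElt x := by
      intro x hx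
      rcases List.mem_append.mp hx with hx | hx
      · rcases List.mem_append.mp hx with hx | hx
        · exact h1 x hx
        · exact hla x hx
      · exact h2 x hx
    have hprod : (l1 ++ la ++ l2).prod = a := by
      rw [List.prod_append, List.prod_append, p1, p2, hpa]; exact key n
    have := hN _ hmem hprod
    simp only [List.length_append, q1, q2] at this
    omega
  have hzero : lu.length = 0 ∧ ld.length = 0 := by
    by_contra hcon
    have hkm : 1 ≤ lu.length + ld.length := by omega
    have h1 := hlen (N + 1)
    have h2 : (N + 1) * 1 ≤ (N + 1) * (lu.length + ld.length) :=
      Nat.mul_le_mul_left _ hkm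
    rw [mul_add] at h2
    rw [mul_one] at h2
    linarith
  have hu : lu = [] := List.length_eq_zero_iff.mp hzero.1
  have hd : ld = [] := List.length_eq_zero_iff.mp hzero.2
  constructor
  · rw [← hpu, hu, List.prod_nil]
  · rw [← hpd, hd, List.prod_nil]

lemma mul_eq_one_both (hAt : Atomic M) {c d : M} (h : c * d = 1) : c = 1 ∧ d = 1 :=
  sandwich hAt (show c * 1 * d = 1 by rwa [mul_one])

lemma dvdL_antisymm' (hAt : Atomic M) (hlc : ∀ a b c : M, a * b = a * c → b = c)
    {a b : M} (h1 : dvdL a b) (h2 : dvdL b a) : a = b := by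
  obtain ⟨c, hc⟩ := h1
  obtain ⟨d, hd⟩ := h2
  have : a * (c * d) = a * 1 := by rw [← mul_assoc, hc, hd, mul_one]
  have hcd := hlc _ _ _ this
  have hc1 := (mul_eq_one_both hAt hcd).1
  rw [← hc, hc1, mul_one]

lemma atom_mem_of_prod (T : Set M) :
    ∀ l : List M, (∀ x ∈ l, x ∈ T) → ∀ a : M, IsAtomElt a → l.prod = a → a ∈ T := by
  intro l
  induction l with
  | nil =>
    intro _ a ha hp
    rw [List.prod_nil] at hp
    exact absurd hp.symm ha.1
  | cons x t ih =>
    intro hmem a ha hp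
    rw [List.prod_cons] at hp
    rcases ha.2 x t.prod hp.symm with hx | ht
    · refine ih (fun y hy => hmem y (List.mem_cons_of_mem _ hy)) a ha ?_
      rw [← hp, hx, one_mul]
    · have : a = x := by rw [← hp, ht, mul_one]
      exact this ▸ hmem x (List.mem_cons_self (a := x) (l := t))

lemma closure_atoms (hAt : Atomic M) :
    Submonoid.closure {x : M | IsAtomElt x} = ⊤ := by
  rw [eq_top_iff]
  intro a _
  obtain ⟨l, hl, hp⟩ := hAt.1 a
  exact hp ▸ Submonoid.list_prod_mem _ (fun x hx => Submonoid.subset_closure (hl x hx))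

lemma atom_dvdL_garside {a e : M} (ha : IsAtomElt a) (he : IsGarsideElt e) : dvdL a e := by
  have hmem : a ∈ Submonoid.closure (Lset e) := by rw [he.2]; exact Submonoid.mem_top a
  obtain ⟨l, hl, hp⟩ := Submonoid.exists_list_of_mem_closure hmem
  exact atom_mem_of_prod (Lset e) l hl a ha hp

/-- The left-glb of two Garside elements is a Garside element. -/
lemma glb_garside (hAt : Atomic M)
    (hglbR : ∀ a b : M, ∃ d, IsGlbR a b d)
    {Δ₁ Δ₂ g : M} (h1 : IsGarsideElt Δ₁) (h2 : IsGarsideElt Δ₂)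
    (hg : IsGlbL Δ₁ Δ₂ g) : IsGarsideElt g := by
  obtain ⟨g', hg'⟩ := hglbR Δ₁ Δ₂
  -- `g` right-divides both (balanced property of `Δᵢ`), hence right-divides `g'`.
  have hgR1 : dvdR g Δ₁ := by
    have : g ∈ Lset Δ₁ := hg.1
    rw [h1.1] at this; exact this
  have hgR2 : dvdR g Δ₂ := by
    have : g ∈ Lset Δ₂ := hg.2.1
    rw [h2.1] at this; exact this
  have hR : dvdR g g' := hg'.2.2 g hgR1 hgR2
  -- `g'` left-divides both, hence left-divides `g`.
  have hgL1 : dvdL g' Δ₁ := by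
    have : g' ∈ Rset Δ₁ := hg'.1
    rw [← h1.1] at this; exact this
  have hgL2 : dvdL g' Δ₂ := by
    have : g' ∈ Rset Δ₂ := hg'.2.1
    rw [← h2.1] at this; exact this
  have hL : dvdL g' g := hg.2.2 g' hgL1 hgL2
  obtain ⟨u, hu⟩ := hR
  obtain ⟨d, hd⟩ := hL
  have hsand : u * g * d = g := by rw [hu, hd]
  obtain ⟨hu1, _⟩ := sandwich hAt hsand
  have hgg' : g' = g := by rw [← hu, hu1, one_mul]
  constructor
  · ext x
    constructor
    · intro hx
      have hx' : dvdL x g := hx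
      have r1 : dvdR x Δ₁ := by
        have : x ∈ Lset Δ₁ := dvdL_trans' hx' hg.1
        rw [h1.1] at this; exact this
      have r2 : dvdR x Δ₂ := by
        have : x ∈ Lset Δ₂ := dvdL_trans' hx' hg.2.1
        rw [h2.1] at this; exact this
      have : dvdR x g' := hg'.2.2 x r1 r2
      rw [hgg'] at this
      exact this
    · intro hx
      have hx' : dvdR x g := hx
      have hx'' : dvdR x g' := by rw [hgg']; exact hx'
      have r1 : dvdL x Δ₁ := by
        have : x ∈ Rset Δ₁ := dvdR_trans' hx'' hg'.1
        rw [← h1.1] at this; exact this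
      have r2 : dvdL x Δ₂ := by
        have : x ∈ Rset Δ₂ := dvdR_trans' hx'' hg'.2.1
        rw [← h2.1] at this; exact this
      exact hg.2.2 x r1 r2
  · have hsub : {x : M | IsAtomElt x} ⊆ Lset g := fun a ha =>
      hg.2.2 a (atom_dvdL_garside ha h1) (atom_dvdL_garside ha h2)
    rw [eq_top_iff, ← closure_atoms hAt]
    exact Submonoid.closure_mono hsub

open Classical in
/-- The maximal length of an expression of `a` as a product of atoms. -/
noncomputable def nu
    (hb : ∀ a : M, ∃ N : ℕ, ∀ l : List M, (∀ x ∈ l, IsAtomElt x) → l.prod = a → l.length ≤ N)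
    (a : M) : ℕ := Nat.find (hb a)

open Classical in
lemma nu_spec
    (hb : ∀ a : M, ∃ N : ℕ, ∀ l : List M, (∀ x ∈ l, IsAtomElt x) → l.prod = a → l.length ≤ N)
    (a : M) : ∀ l : List M, (∀ x ∈ l, IsAtomElt x) → l.prod = a → l.length ≤ nu hb a :=
  Nat.find_spec (hb a)

open Classical in
lemma nu_min
    (hb : ∀ a : M, ∃ N : ℕ, ∀ l : List M, (∀ x ∈ l, IsAtomElt x) → l.prod = a → l.length ≤ N)
    (a : M) {m : ℕ}
    (h : ∀ l : List M, (∀ x ∈ l, IsAtomElt x) → l.prod = a → l.length ≤ m) :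
    nu hb a ≤ m :=
  Nat.find_min' (hb a) h

lemma nu_lt (hAt : Atomic M) (a c : M) (hc : c ≠ 1) :
    nu hAt.2 a < nu hAt.2 (a * c) := by
  obtain ⟨lc, hlc, hpc⟩ := hAt.1 c
  have hlc1 : 1 ≤ lc.length := by
    rcases Nat.eq_zero_or_pos lc.length with h | h
    · exfalso
      apply hc
      rw [← hpc, List.length_eq_zero_iff.mp h, List.prod_nil]
    · exact h
  have hstep : ∀ l : List M, (∀ x ∈ l, IsAtomElt x) → l.prod = a →
      l.length + lc.length ≤ nu hAt.2 (a * c) := by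
    intro l hl hp
    have := nu_spec hAt.2 (a * c) (l ++ lc) ?_ ?_
    · simpa [List.length_append] using this
    · intro x hx
      rcases List.mem_append.mp hx with hx | hx
      · exact hl x hx
      · exact hlc x hx
    · rw [List.prod_append, hp, hpc]
  obtain ⟨la, hla, hpa⟩ := hAt.1 a
  have hpos : 1 ≤ nu hAt.2 (a * c) := by
    have := hstep la hla hpa
    omega
  have hle : nu hAt.2 a ≤ nu hAt.2 (a * c) - 1 := by
    apply nu_min
    intro l hl hp
    have := hstep l hl hp
    omega
  omega

end Aux

/-- **Lemma 3.3 (minimal Garside element).** In a Garside monoid `M` there exists a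
unique Garside element `Δ` which is minimal with respect to both `≤_L` and `≤_R`
among all Garside elements of `M`. -/
theorem exists_unique_minimal_garside_elt {M : Type*} [Monoid M]
    (hM : IsGarsideMonoid M) :
    ∃! Δ : M, IsGarsideElt Δ ∧
      ∀ Δ' : M, IsGarsideElt Δ' → dvdL Δ Δ' ∧ dvdR Δ Δ' := by
  classical
  obtain ⟨-, hlc, hrc, hAt, hglbL, hlubL, hglbR, hlubR, Δ₀, hΔ₀⟩ := hM
  have hex : ∃ n : ℕ, ∃ Δ : M, IsGarsideElt Δ ∧ nu hAt.2 Δ = n :=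
    ⟨nu hAt.2 Δ₀, Δ₀, hΔ₀, rfl⟩
  obtain ⟨Δ, hΔ, hn⟩ := Nat.find_spec hex
  have hmin : ∀ Δ'' : M, IsGarsideElt Δ'' → dvdL Δ Δ'' ∧ dvdR Δ Δ'' := by
    intro Δ'' h''
    obtain ⟨g, hg⟩ := hglbL Δ Δ''
    have hgG : IsGarsideElt g := glb_garside hAt hglbR hΔ h'' hg
    have hgΔ : g = Δ := by
      by_contra hne
      obtain ⟨c, hc⟩ := hg.1
      have hc1 : c ≠ 1 := by
        rintro rfl
        rw [mul_one] at hc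
        exact hne hc
      have hlt : nu hAt.2 g < nu hAt.2 Δ := by
        have := nu_lt hAt g c hc1
        rwa [hc] at this
      have hge : Nat.find hex ≤ nu hAt.2 g := Nat.find_min' hex ⟨g, hgG, rfl⟩
      omega
    have hdL : dvdL Δ Δ'' := hgΔ ▸ hg.2.1
    refine ⟨hdL, ?_⟩
    have : Δ ∈ Lset Δ'' := hdL
    rw [h''.1] at this
    exact this
  refine ⟨Δ, ⟨hΔ, hmin⟩, ?_⟩
  rintro y ⟨hyG, hymin⟩
  exact dvdL_antisymm' hAt hlc (hymin Δ hΔ).1 (hmin y hyG).1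
end

section
/- Suppose moreover that Δ_H^x = Δ_H for all x ∈ G, and let D = (Δ_G, Δ_H) ∈ G ⋉ H. Let (g,h) ∈ G ⋉ H. (i) If r₁ is the greatest integer with Δ_G^{r₁} ≤_L g in G and r₂ is the greatest integer with Δ_H^{r₂} ≤_L h in H, then min{r₁, r₂} is the greatest integer r such that D^r ≤_L (g,h) in G ⋉ H. (ii) If s₁ is the least integer with g ≤_L Δ_G^{s₁} in G and s₂ is the least integer with h ≤_L Δ_H^{s₂} in H, then max{s₁, s₂} is the least integer s such that (g,h) ≤_L D^s in G ⋉ H. -/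
/-- Group-level left divisibility: `a ≤_L b` iff `a⁻¹ * b` is positive. -/
def gdvdL {G : Type*} [Group G] (P : Submonoid G) (a b : G) : Prop := a⁻¹ * b ∈ P

/-- Group-level right divisibility: `a ≤_R b` iff `b * a⁻¹` is positive. -/
def gdvdR {G : Type*} [Group G] (P : Submonoid G) (a b : G) : Prop := b * a⁻¹ ∈ P

/-- `G` is a Garside group with positive monoid `P` and chosen Garside element `Δ`:
`P` is a Garside monoid, every element of `G` is a fraction `a * b⁻¹` of positive
elements, and `Δ` is a Garside element of `P`. -/
def IsGarsideGroup {G : Type*} [Group G] (P : Submonoid G) (Δ : G) : Prop :=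
  IsGarsideMonoid P ∧
  (∀ g : G, ∃ a b : P, g = (a : G) * (b : G)⁻¹) ∧
  ∃ hΔ : Δ ∈ P, IsGarsideElt (⟨Δ, hΔ⟩ : P)

/-- A right action of the group `G` on the group `H` by group automorphisms,
written `h ↦ ρ.act x h` (the paper's `h^x`). -/
structure RightAction (G H : Type*) [Group G] [Group H] where
  act : G → H → H
  act_mul : ∀ (x : G) (h₁ h₂ : H), act x (h₁ * h₂) = act x h₁ * act x h₂
  act_one : ∀ h : H, act 1 h = h
  act_comp : ∀ (x y : G) (h : H), act (x * y) h = act y (act x h)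

namespace RightAction

variable {G H : Type*} [Group G] [Group H]

lemma act_one' (ρ : RightAction G H) (x : G) : ρ.act x 1 = 1 := by
  have h := ρ.act_mul x 1 1
  rw [one_mul] at h
  exact left_eq_mul.mp h

end RightAction

/-- The semidirect product `G ⋉ H` with multiplication
`(x₁,h₁)·(x₂,h₂) = (x₁·x₂, h₁^{x₂}·h₂)`. -/
structure SDP {G H : Type*} [Group G] [Group H] (ρ : RightAction G H) where
  g : G
  h : H

namespace SDP

variable {G H : Type*} [Group G] [Group H] {ρ : RightAction G H}

protected def gmul (p q : SDP ρ) : SDP ρ := ⟨p.g * q.g, ρ.act q.g p.h * q.h⟩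

protected def gone : SDP ρ := ⟨1, 1⟩

protected def ginv (p : SDP ρ) : SDP ρ := ⟨p.g⁻¹, ρ.act p.g⁻¹ p.h⁻¹⟩

protected lemma gmul_assoc (p q r : SDP ρ) :
    SDP.gmul (SDP.gmul p q) r = SDP.gmul p (SDP.gmul q r) := by
  simp only [SDP.gmul, mk.injEq]
  exact ⟨mul_assoc _ _ _, by rw [ρ.act_mul, ρ.act_comp, mul_assoc]⟩

protected lemma gone_mul (p : SDP ρ) : SDP.gmul SDP.gone p = p := by
  simp only [SDP.gmul, SDP.gone]
  simp [RightAction.act_one']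

protected lemma gmul_one (p : SDP ρ) : SDP.gmul p SDP.gone = p := by
  simp only [SDP.gmul, SDP.gone]
  simp [ρ.act_one]

protected lemma ginv_mul_cancel (p : SDP ρ) : SDP.gmul (SDP.ginv p) p = SDP.gone := by
  simp only [SDP.gmul, SDP.ginv, SDP.gone, mk.injEq]
  rw [← ρ.act_comp]
  simp [ρ.act_one]

/-- The group structure on the semidirect product `G ⋉ H`. -/
instance : Group (SDP ρ) where
  mul := SDP.gmul
  one := SDP.gone
  inv := SDP.ginv
  mul_assoc := SDP.gmul_assoc
  one_mul := SDP.gone_mul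
  mul_one := SDP.gmul_one
  inv_mul_cancel := SDP.ginv_mul_cancel

@[simp] lemma mul_g (p q : SDP ρ) : (p * q).g = p.g * q.g := rfl
@[simp] lemma mul_h (p q : SDP ρ) : (p * q).h = ρ.act q.g p.h * q.h := rfl
@[simp] lemma one_g : (1 : SDP ρ).g = 1 := rfl
@[simp] lemma one_h : (1 : SDP ρ).h = 1 := rfl

end SDP

/-- Membership in the submonoid `G⁺ ⋉ H⁺` of `G ⋉ H`. -/
def SDPpos {G H : Type*} [Group G] [Group H] {ρ : RightAction G H}
    (PG : Submonoid G) (PH : Submonoid H) (p : SDP ρ) : Prop :=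
  p.g ∈ PG ∧ p.h ∈ PH

/-- `p ≤_L q` in `G ⋉ H`: `p · u = q` for some `u ∈ G⁺ ⋉ H⁺`. -/
def SDPdvdL {G H : Type*} [Group G] [Group H] {ρ : RightAction G H}
    (PG : Submonoid G) (PH : Submonoid H) (p q : SDP ρ) : Prop :=
  ∃ u : SDP ρ, SDPpos PG PH u ∧ p * u = q

/-- `p ≤_R q` in `G ⋉ H`: `u · p = q` for some `u ∈ G⁺ ⋉ H⁺`. -/
def SDPdvdR {G H : Type*} [Group G] [Group H] {ρ : RightAction G H}
    (PG : Submonoid G) (PH : Submonoid H) (p q : SDP ρ) : Prop :=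
  ∃ u : SDP ρ, SDPpos PG PH u ∧ u * p = q

section MyAux

variable {G H : Type*} [Group G] [Group H]

lemma my_zpow_mem {P : Submonoid G} {Δ : G} (hΔ : Δ ∈ P) {n : ℤ} (hn : 0 ≤ n) :
    Δ ^ n ∈ P := by
  obtain ⟨m, rfl⟩ := Int.eq_ofNat_of_zero_le hn
  rw [zpow_natCast]; exact pow_mem hΔ m

lemma my_gdvdL_mono {P : Submonoid G} {Δ g : G} (hΔ : Δ ∈ P) {t t' : ℤ} (h : t' ≤ t)
    (hd : gdvdL P (Δ ^ t) g) : gdvdL P (Δ ^ t') g := by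
  unfold gdvdL at *
  have key : (Δ ^ t')⁻¹ * g = Δ ^ (t - t') * ((Δ ^ t)⁻¹ * g) := by group
  rw [key]
  exact mul_mem (my_zpow_mem hΔ (by omega)) hd

lemma my_gdvdL_mono' {P : Submonoid G} {Δ g : G} (hΔ : Δ ∈ P) {t t' : ℤ} (h : t ≤ t')
    (hd : gdvdL P g (Δ ^ t)) : gdvdL P g (Δ ^ t') := by
  unfold gdvdL at *
  have key : g⁻¹ * Δ ^ t' = (g⁻¹ * Δ ^ t) * Δ ^ (t' - t) := by group
  rw [key]
  exact mul_mem hd (my_zpow_mem hΔ (by omega))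

/-- `ρ.act x` as a monoid hom. -/
def myActHom (ρ : RightAction G H) (x : G) : H →* H where
  toFun := ρ.act x
  map_one' := ρ.act_one' x
  map_mul' := ρ.act_mul x

lemma my_act_fix {ρ : RightAction G H} {ΔH : H} (hfix : ∀ x : G, ρ.act x ΔH = ΔH)
    (x : G) (t : ℤ) : ρ.act x (ΔH ^ t) = ΔH ^ t := by
  have := map_zpow (myActHom ρ x) ΔH t
  simpa [myActHom, hfix x] using this

lemma my_act_injective (ρ : RightAction G H) (x : G) : Function.Injective (ρ.act x) := by
  intro a b hab
  have : ρ.act x⁻¹ (ρ.act x a) = ρ.act x⁻¹ (ρ.act x b) := by rw [hab]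
  rwa [← ρ.act_comp, ← ρ.act_comp, mul_inv_cancel, ρ.act_one, ρ.act_one] at this

lemma my_act_mem_iff {ρ : RightAction G H} {PH : Submonoid H}
    (hact : ∀ x : G, ρ.act x '' (PH : Set H) = (PH : Set H)) (x : G) (z : H) :
    ρ.act x z ∈ PH ↔ z ∈ PH := by
  constructor
  · intro hz
    have hz2 : ρ.act x z ∈ ρ.act x '' (PH : Set H) := by rw [hact x]; exact hz
    obtain ⟨w, hw, hwz⟩ := hz2
    rwa [← my_act_injective ρ x hwz]
  · intro hz
    have : ρ.act x z ∈ ρ.act x '' (PH : Set H) := ⟨z, hz, rfl⟩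
    rwa [hact x] at this

variable {ρ : RightAction G H}

@[simp] lemma my_inv_g (p : SDP ρ) : (p⁻¹).g = p.g⁻¹ := rfl
@[simp] lemma my_inv_h (p : SDP ρ) : (p⁻¹).h = ρ.act p.g⁻¹ p.h⁻¹ := rfl

lemma my_SDP_ext {p q : SDP ρ} (h1 : p.g = q.g) (h2 : p.h = q.h) : p = q := by
  cases p; cases q; simp_all

lemma my_SDPdvdL_iff (PG : Submonoid G) (PH : Submonoid H) (p q : SDP ρ) :
    SDPdvdL PG PH p q ↔ SDPpos PG PH (p⁻¹ * q) := by
  constructor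
  · rintro ⟨u, hu, rfl⟩
    rwa [inv_mul_cancel_left]
  · intro hp
    exact ⟨p⁻¹ * q, hp, by rw [mul_inv_cancel_left]⟩

lemma my_D_zpow {ΔG : G} {ΔH : H} (hfix : ∀ x : G, ρ.act x ΔH = ΔH) (t : ℤ) :
    (SDP.mk ΔG ΔH : SDP ρ) ^ t = SDP.mk (ΔG ^ t) (ΔH ^ t) := by
  have hpow : ∀ n : ℕ, (SDP.mk ΔG ΔH : SDP ρ) ^ n = SDP.mk (ΔG ^ n) (ΔH ^ n) := by
    intro n
    induction n with
    | zero => apply my_SDP_ext <;> simp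
    | succ n ih =>
      rw [pow_succ, ih]
      apply my_SDP_ext
      · simp [pow_succ]
      · simp only [SDP.mul_h]
        have : ρ.act ΔG (ΔH ^ (n : ℤ)) = ΔH ^ (n : ℤ) := my_act_fix hfix ΔG n
        rw [zpow_natCast] at this
        rw [this, pow_succ]
  cases t with
  | ofNat n => simpa using hpow n
  | negSucc n =>
    rw [zpow_negSucc, hpow (n + 1)]
    apply my_SDP_ext
    · simp [zpow_negSucc]
    · show ρ.act (ΔG ^ (n + 1))⁻¹ (ΔH ^ (n + 1))⁻¹ = ΔH ^ Int.negSucc n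
      have := my_act_fix hfix (ΔG ^ (n + 1))⁻¹ (-(n + 1 : ℕ) : ℤ)
      rw [zpow_neg, zpow_natCast] at this
      rw [this, zpow_negSucc]

end MyAux

/-- **Lemma 4.4 (4),(5).** Suppose `Δ_H` is fixed under the action of `G` and let
`D = (Δ_G, Δ_H)`. For `(g,h) ∈ G ⋉ H`,
`inf((g,h)) = min{inf(g), inf(h)}` and `sup((g,h)) = max{sup(g), sup(h)}`. -/
theorem sdp_inf_sup {G H : Type*} [Group G] [Group H] (ρ : RightAction G H)
    (PG : Submonoid G) (PH : Submonoid H) (ΔG : G) (ΔH : H)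
    (hG : IsGarsideGroup PG ΔG) (hH : IsGarsideGroup PH ΔH)
    (hact : ∀ x : G, ρ.act x '' (PH : Set H) = (PH : Set H))
    (hfix : ∀ x : G, ρ.act x ΔH = ΔH)
    (g : G) (h : H) (r₁ r₂ s₁ s₂ : ℤ)
    (hr₁ : IsGreatest {t : ℤ | gdvdL PG (ΔG ^ t) g} r₁)
    (hr₂ : IsGreatest {t : ℤ | gdvdL PH (ΔH ^ t) h} r₂)
    (hs₁ : IsLeast {t : ℤ | gdvdL PG g (ΔG ^ t)} s₁)
    (hs₂ : IsLeast {t : ℤ | gdvdL PH h (ΔH ^ t)} s₂) :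
    IsGreatest {t : ℤ | SDPdvdL PG PH ((SDP.mk ΔG ΔH : SDP ρ) ^ t) (SDP.mk g h)}
      (min r₁ r₂) ∧
    IsLeast {t : ℤ | SDPdvdL PG PH (SDP.mk g h : SDP ρ) ((SDP.mk ΔG ΔH : SDP ρ) ^ t)}
      (max s₁ s₂) := by
  obtain ⟨hΔG, -⟩ := hG.2.2
  obtain ⟨hΔH, -⟩ := hH.2.2
  have hchr1 : ∀ t : ℤ, SDPdvdL PG PH ((SDP.mk ΔG ΔH : SDP ρ) ^ t) (SDP.mk g h) ↔
      (gdvdL PG (ΔG ^ t) g ∧ gdvdL PH (ΔH ^ t) h) := by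
    intro t
    rw [my_SDPdvdL_iff, my_D_zpow hfix]
    have h1 : ρ.act (ΔG ^ t)⁻¹ (ΔH ^ t)⁻¹ = (ΔH ^ t)⁻¹ := by
      have := my_act_fix hfix (ΔG ^ t)⁻¹ (-t)
      rwa [zpow_neg] at this
    have h2 : ρ.act g (ΔH ^ t)⁻¹ = (ΔH ^ t)⁻¹ := by
      have := my_act_fix hfix g (-t)
      rwa [zpow_neg] at this
    unfold SDPpos gdvdL
    simp only [SDP.mul_g, SDP.mul_h, my_inv_g, my_inv_h, h1, h2]
  have hchr2 : ∀ t : ℤ, SDPdvdL PG PH (SDP.mk g h : SDP ρ) ((SDP.mk ΔG ΔH : SDP ρ) ^ t) ↔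
      (gdvdL PG g (ΔG ^ t) ∧ gdvdL PH h (ΔH ^ t)) := by
    intro t
    rw [my_SDPdvdL_iff, my_D_zpow hfix]
    unfold SDPpos gdvdL
    simp only [SDP.mul_g, SDP.mul_h, my_inv_g, my_inv_h]
    constructor
    · rintro ⟨hg1, hh1⟩
      refine ⟨hg1, ?_⟩
      have key : ρ.act (ΔG ^ t) (ρ.act g⁻¹ h⁻¹) * ΔH ^ t
          = ρ.act (g⁻¹ * ΔG ^ t) (h⁻¹ * ΔH ^ t) := by
        rw [ρ.act_mul, ← ρ.act_comp, my_act_fix hfix]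
      rw [key] at hh1
      rwa [my_act_mem_iff hact] at hh1
    · rintro ⟨hg1, hh1⟩
      refine ⟨hg1, ?_⟩
      have key : ρ.act (ΔG ^ t) (ρ.act g⁻¹ h⁻¹) * ΔH ^ t
          = ρ.act (g⁻¹ * ΔG ^ t) (h⁻¹ * ΔH ^ t) := by
        rw [ρ.act_mul, ← ρ.act_comp, my_act_fix hfix]
      rw [key]
      rwa [my_act_mem_iff hact]
  constructor
  · constructor
    · show SDPdvdL PG PH _ _
      rw [hchr1]
      exact ⟨my_gdvdL_mono hΔG (min_le_left r₁ r₂) hr₁.1,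
        my_gdvdL_mono hΔH (min_le_right r₁ r₂) hr₂.1⟩
    · intro t ht
      rw [Set.mem_setOf_eq, hchr1] at ht
      exact le_min (hr₁.2 ht.1) (hr₂.2 ht.2)
  · constructor
    · show SDPdvdL PG PH _ _
      rw [hchr2]
      exact ⟨my_gdvdL_mono' hΔG (le_max_left s₁ s₂) hs₁.1,
        my_gdvdL_mono' hΔH (le_max_right s₁ s₂) hs₂.1⟩
    · intro t ht
      rw [Set.mem_setOf_eq, hchr2] at ht
      exact max_le (hs₁.2 ht.1) (hs₂.2 ht.2)
end

section
/- Let G be a Garside group with positive monoid G⁺ and Garside element Δ, let n ≥ 1, g ∈ G, k ∈ ℤ, and set α = δ^k(g, …, g) ∈ G(n). Suppose g is in its super summit set, i.e. for every conjugate h of g in G and every integer t: Δ^t ≤_L h implies Δ^t ≤_L g, and h ≤_L Δ^t implies g ≤_L Δ^t. Then α is in its super summit set in G(n): for every conjugate β of α in G(n) and every integer t, 𝐃^t ≤_L β implies 𝐃^t ≤_L α, and β ≤_L 𝐃^t implies α ≤_L 𝐃^t. -/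
/-- `G(n) = ℤ ⋉ Gⁿ`: the element `δ^k(g₁,…,gₙ)` is recorded as the pair of `k : ℤ`
and the tuple `v : ZMod n → G` (index `j ∈ {1,…,n}` of the paper corresponds to
`j - 1 : ZMod n`). -/
structure Gn (G : Type*) (n : ℕ) where
  k : ℤ
  v : ZMod n → G

namespace Gn

variable {G : Type*} [Group G] {n : ℕ}

protected def gmul (p q : Gn G n) : Gn G n :=
  ⟨p.k + q.k, fun i => p.v (i - (q.k : ZMod n)) * q.v i⟩

protected def gone : Gn G n := ⟨0, fun _ => 1⟩

protected def ginv (p : Gn G n) : Gn G n :=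
  ⟨-p.k, fun i => (p.v (i + (p.k : ZMod n)))⁻¹⟩

protected lemma gmul_assoc (p q r : Gn G n) :
    Gn.gmul (Gn.gmul p q) r = Gn.gmul p (Gn.gmul q r) := by
  simp only [Gn.gmul, mk.injEq]
  constructor
  · ring
  · funext i
    simp only [Int.cast_add]
    rw [show i - ((q.k : ZMod n) + (r.k : ZMod n)) = i - (r.k : ZMod n) - (q.k : ZMod n) by ring]
    rw [mul_assoc]

protected lemma gone_mul (p : Gn G n) : Gn.gmul Gn.gone p = p := by
  simp only [Gn.gmul, Gn.gone]
  simp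

protected lemma gmul_one (p : Gn G n) : Gn.gmul p Gn.gone = p := by
  simp only [Gn.gmul, Gn.gone]
  simp

protected lemma ginv_mul_cancel (p : Gn G n) : Gn.gmul (Gn.ginv p) p = Gn.gone := by
  simp only [Gn.gmul, Gn.ginv, Gn.gone, mk.injEq]
  constructor
  · ring
  · funext i
    simp

/-- The group structure of `G(n) = ℤ ⋉ Gⁿ`, where `ℤ = ⟨δ⟩` acts on `Gⁿ` by the
cyclic coordinate shift: `δ^k(u) · δ^m(v) = δ^{k+m}(u^{δ^m} · v)`. -/
instance : Group (Gn G n) where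
  mul := Gn.gmul
  one := Gn.gone
  inv := Gn.ginv
  mul_assoc := Gn.gmul_assoc
  one_mul := Gn.gone_mul
  mul_one := Gn.gmul_one
  inv_mul_cancel := Gn.ginv_mul_cancel

@[simp] lemma mul_k (p q : Gn G n) : (p * q).k = p.k + q.k := rfl
@[simp] lemma mul_v (p q : Gn G n) (i : ZMod n) :
    (p * q).v i = p.v (i - (q.k : ZMod n)) * q.v i := rfl
@[simp] lemma one_k : (1 : Gn G n).k = 0 := rfl
@[simp] lemma one_v (i : ZMod n) : (1 : Gn G n).v i = 1 := rfl

end Gn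

/-- The positive monoid `G(n)⁺ = {δ^k(a₁,…,aₙ) : k ≥ 0, aᵢ ∈ G⁺}` of `G(n)`. -/
def GnPos {G : Type*} [Group G] (n : ℕ) (P : Submonoid G) : Submonoid (Gn G n) where
  carrier := {p | 0 ≤ p.k ∧ ∀ i, p.v i ∈ P}
  mul_mem' := by
    rintro p q ⟨hp1, hp2⟩ ⟨hq1, hq2⟩
    refine ⟨?_, fun i => ?_⟩
    · rw [Gn.mul_k]; exact add_nonneg hp1 hq1
    · rw [Gn.mul_v]; exact mul_mem (hp2 _) (hq2 _)
  one_mem' := ⟨by rw [Gn.one_k], fun i => by rw [Gn.one_v]; exact one_mem P⟩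

/-- The Garside element `𝐃 = δ(Δ,…,Δ)` of `G(n)`. -/
def Dn (G : Type*) [Group G] (n : ℕ) (Δ : G) : Gn G n := ⟨1, fun _ => Δ⟩


section SuperSummitHelpers

variable {G : Type*} [Group G] {P : Submonoid G} {Δ : G}

private lemma gss_conj_delta (hΔP : Δ ∈ P)
    (hLR : Lset (⟨Δ, hΔP⟩ : P) = Rset (⟨Δ, hΔP⟩ : P))
    (hcl : Submonoid.closure (Lset (⟨Δ, hΔP⟩ : P)) = ⊤) :
    ∀ x : P, Δ * (x : G) * Δ⁻¹ ∈ P := by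
  intro x
  have hx : x ∈ Submonoid.closure (Lset (⟨Δ, hΔP⟩ : P)) := by rw [hcl]; trivial
  induction hx using Submonoid.closure_induction with
  | mem y hy =>
    rw [hLR] at hy
    obtain ⟨dd, hdd⟩ := hy
    have hdd' : (dd : G) * y = Δ := congrArg Subtype.val hdd
    have hddL : dd ∈ Lset (⟨Δ, hΔP⟩ : P) := ⟨y, hdd⟩
    rw [hLR] at hddL
    obtain ⟨e, he⟩ := hddL
    have he' : (e : G) * dd = Δ := congrArg Subtype.val he
    have h1 : (y : G) = (dd : G)⁻¹ * Δ := by rw [eq_inv_mul_iff_mul_eq]; exact hdd'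
    have key : Δ * (y : G) * Δ⁻¹ = (e : G) := by
      rw [h1, ← he']; group
    rw [key]; exact e.2
  | one => simpa using one_mem P
  | mul y z hy hz ihy ihz =>
    have key : Δ * ((y * z : P) : G) * Δ⁻¹ = (Δ * (y : G) * Δ⁻¹) * (Δ * (z : G) * Δ⁻¹) := by
      push_cast; group
    rw [key]; exact mul_mem ihy ihz

private lemma gss_conj_delta_inv (hΔP : Δ ∈ P)
    (hLR : Lset (⟨Δ, hΔP⟩ : P) = Rset (⟨Δ, hΔP⟩ : P))
    (hcl : Submonoid.closure (Lset (⟨Δ, hΔP⟩ : P)) = ⊤) :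
    ∀ x : P, Δ⁻¹ * (x : G) * Δ ∈ P := by
  intro x
  have hx : x ∈ Submonoid.closure (Lset (⟨Δ, hΔP⟩ : P)) := by rw [hcl]; trivial
  induction hx using Submonoid.closure_induction with
  | mem y hy =>
    obtain ⟨c, hc⟩ := hy
    have hc' : (y : G) * c = Δ := congrArg Subtype.val hc
    have hcR : c ∈ Rset (⟨Δ, hΔP⟩ : P) := ⟨y, hc⟩
    rw [← hLR] at hcR
    obtain ⟨e, he⟩ := hcR
    have he' : (c : G) * e = Δ := congrArg Subtype.val he
    have h1 : (y : G) = Δ * (c : G)⁻¹ := by rw [eq_mul_inv_iff_mul_eq]; exact hc'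
    have key : Δ⁻¹ * (y : G) * Δ = (e : G) := by
      rw [h1, ← he']; group
    rw [key]; exact e.2
  | one => simpa using one_mem P
  | mul y z hy hz ihy ihz =>
    have key : Δ⁻¹ * ((y * z : P) : G) * Δ = (Δ⁻¹ * (y : G) * Δ) * (Δ⁻¹ * (z : G) * Δ) := by
      push_cast; group
    rw [key]; exact mul_mem ihy ihz

private lemma gss_conjP (hΔP : Δ ∈ P)
    (hLR : Lset (⟨Δ, hΔP⟩ : P) = Rset (⟨Δ, hΔP⟩ : P))
    (hcl : Submonoid.closure (Lset (⟨Δ, hΔP⟩ : P)) = ⊤) :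
    ∀ (s : ℤ) (a : G), a ∈ P → Δ ^ s * a * (Δ ^ s)⁻¹ ∈ P := by
  intro s
  induction s using Int.induction_on with
  | zero => intro a ha; simpa using ha
  | succ i ih =>
    intro a ha
    have key : Δ ^ ((i : ℤ) + 1) * a * (Δ ^ ((i : ℤ) + 1))⁻¹
        = Δ * (Δ ^ (i : ℤ) * a * (Δ ^ (i : ℤ))⁻¹) * Δ⁻¹ := by group
    rw [key]
    exact gss_conj_delta hΔP hLR hcl ⟨_, ih a ha⟩
  | pred i ih =>
    intro a ha
    have key : Δ ^ (-(i : ℤ) - 1) * a * (Δ ^ (-(i : ℤ) - 1))⁻¹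
        = Δ⁻¹ * (Δ ^ (-(i : ℤ)) * a * (Δ ^ (-(i : ℤ)))⁻¹) * Δ := by group
    rw [key]
    exact gss_conj_delta_inv hΔP hLR hcl ⟨_, ih a ha⟩

private lemma gss_ldvd_pow (hΔP : Δ ∈ P)
    (hconj : ∀ (s : ℤ) (a : G), a ∈ P → Δ ^ s * a * (Δ ^ s)⁻¹ ∈ P)
    (hcl : Submonoid.closure (Lset (⟨Δ, hΔP⟩ : P)) = ⊤) :
    ∀ x : P, ∃ m : ℕ, (x : G)⁻¹ * Δ ^ m ∈ P := by
  intro x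
  have hx : x ∈ Submonoid.closure (Lset (⟨Δ, hΔP⟩ : P)) := by rw [hcl]; trivial
  induction hx using Submonoid.closure_induction with
  | mem y hy =>
    obtain ⟨c, hc⟩ := hy
    have hc' : (y : G) * c = Δ := congrArg Subtype.val hc
    refine ⟨1, ?_⟩
    have : (y : G)⁻¹ * Δ ^ 1 = (c : G) := by rw [pow_one, ← hc']; group
    rw [this]; exact c.2
  | one => exact ⟨0, by simpa using one_mem P⟩
  | mul y z hy hz ihy ihz =>
    obtain ⟨m₁, h₁⟩ := ihy
    obtain ⟨m₂, h₂⟩ := ihz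
    refine ⟨m₁ + m₂, ?_⟩
    have key : ((y * z : P) : G)⁻¹ * Δ ^ (m₁ + m₂)
        = ((z : G)⁻¹ * Δ ^ m₂) * (Δ ^ (-(m₂ : ℤ)) * ((y : G)⁻¹ * Δ ^ m₁) * (Δ ^ (-(m₂ : ℤ)))⁻¹) := by
      push_cast; group
    rw [key]
    exact mul_mem h₂ (hconj _ _ h₁)

private lemma gss_mul_pow_mem (hΔP : Δ ∈ P)
    (hfrac : ∀ g : G, ∃ a b : P, g = (a : G) * (b : G)⁻¹)
    (hconj : ∀ (s : ℤ) (a : G), a ∈ P → Δ ^ s * a * (Δ ^ s)⁻¹ ∈ P)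
    (hcl : Submonoid.closure (Lset (⟨Δ, hΔP⟩ : P)) = ⊤) :
    ∀ c : G, ∃ m : ℕ, c * Δ ^ m ∈ P := by
  intro c
  obtain ⟨a, b, hab⟩ := hfrac c
  obtain ⟨m, hm⟩ := gss_ldvd_pow hΔP hconj hcl b
  refine ⟨m, ?_⟩
  have : c * Δ ^ m = (a : G) * ((b : G)⁻¹ * Δ ^ m) := by rw [hab]; group
  rw [this]; exact mul_mem a.2 hm

private lemma gss_glb_bound (hΔP : Δ ∈ P) (hglbax : ∀ a b : P, ∃ d, IsGlbR a b d) :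
    ∀ (m : ℕ) (aP bP dP : P), IsGlbR aP bP dP → ∀ q : G, q ∈ P →
      (aP : G) * Δ ^ m * q⁻¹ ∈ P → (bP : G) * Δ ^ m * q⁻¹ ∈ P →
      (dP : G) * Δ ^ m * q⁻¹ ∈ P := by
  intro m
  induction m with
  | zero =>
    intro aP bP dP hglb q hq ha hb
    have hqa : dvdR (⟨q, hq⟩ : P) aP := by
      refine ⟨⟨(aP : G) * q⁻¹, by simpa using ha⟩, ?_⟩
      exact Subtype.ext (show ((aP : G) * q⁻¹) * q = (aP : G) by group)
    have hqb : dvdR (⟨q, hq⟩ : P) bP := by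
      refine ⟨⟨(bP : G) * q⁻¹, by simpa using hb⟩, ?_⟩
      exact Subtype.ext (show ((bP : G) * q⁻¹) * q = (bP : G) by group)
    obtain ⟨f, hf⟩ := hglb.2.2 _ hqa hqb
    have hf' : (f : G) * q = dP := congrArg Subtype.val hf
    have : (dP : G) * Δ ^ 0 * q⁻¹ = (f : G) := by rw [← hf']; group
    rw [this]; exact f.2
  | succ m ih =>
    intro aP bP dP hglb q hq ha hb
    have haΔ : ((aP : G) * Δ) ∈ P := mul_mem aP.2 hΔP
    have hbΔ : ((bP : G) * Δ) ∈ P := mul_mem bP.2 hΔP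
    obtain ⟨d₁, hd₁⟩ := hglbax ⟨_, haΔ⟩ ⟨_, hbΔ⟩
    have hΔa : dvdR (⟨Δ, hΔP⟩ : P) ⟨_, haΔ⟩ := ⟨aP, Subtype.ext rfl⟩
    have hΔb : dvdR (⟨Δ, hΔP⟩ : P) ⟨_, hbΔ⟩ := ⟨bP, Subtype.ext rfl⟩
    obtain ⟨d₁', hd₁'⟩ := hd₁.2.2 _ hΔa hΔb
    have hd₁'c : (d₁' : G) * Δ = d₁ := congrArg Subtype.val hd₁'
    obtain ⟨e, he⟩ := hd₁.1
    have he' : (e : G) * d₁ = (aP : G) * Δ := congrArg Subtype.val he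
    have hd₁'a : dvdR d₁' aP := by
      refine ⟨e, Subtype.ext ?_⟩
      have h0 : (e : G) * ((d₁' : G) * Δ) = (aP : G) * Δ := by rw [hd₁'c]; exact he'
      have h1 : (e : G) * (d₁' : G) * Δ = (aP : G) * Δ := by rw [mul_assoc]; exact h0
      have := mul_right_cancel h1
      simpa using this
    obtain ⟨e₂, he₂⟩ := hd₁.2.1
    have he₂' : (e₂ : G) * d₁ = (bP : G) * Δ := congrArg Subtype.val he₂
    have hd₁'b : dvdR d₁' bP := by
      refine ⟨e₂, Subtype.ext ?_⟩
      have h0 : (e₂ : G) * ((d₁' : G) * Δ) = (bP : G) * Δ := by rw [hd₁'c]; exact he₂'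
      have h1 : (e₂ : G) * (d₁' : G) * Δ = (bP : G) * Δ := by rw [mul_assoc]; exact h0
      have := mul_right_cancel h1
      simpa using this
    obtain ⟨f, hf⟩ := hglb.2.2 _ hd₁'a hd₁'b
    have hf' : (f : G) * d₁' = dP := congrArg Subtype.val hf
    have ha' : ((⟨_, haΔ⟩ : P) : G) * Δ ^ m * q⁻¹ ∈ P := by
      have h0 : ((aP : G) * Δ) * Δ ^ m * q⁻¹ = (aP : G) * Δ ^ (m + 1) * q⁻¹ := by
        rw [mul_assoc ((aP : G)), ← pow_succ']
      simpa [h0] using ha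
    have hb' : ((⟨_, hbΔ⟩ : P) : G) * Δ ^ m * q⁻¹ ∈ P := by
      have h0 : ((bP : G) * Δ) * Δ ^ m * q⁻¹ = (bP : G) * Δ ^ (m + 1) * q⁻¹ := by
        rw [mul_assoc ((bP : G)), ← pow_succ']
      simpa [h0] using hb
    have hD₁ := ih _ _ _ hd₁ q hq ha' hb'
    have key : (dP : G) * Δ ^ (m + 1) * q⁻¹ = (f : G) * ((d₁ : G) * Δ ^ m * q⁻¹) := by
      rw [← hf', ← hd₁'c]; group
    rw [key]
    exact mul_mem f.2 hD₁

private lemma gss_exists_glbG (hΔP : Δ ∈ P) (hglbax : ∀ a b : P, ∃ d, IsGlbR a b d)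
    (hpow : ∀ c : G, ∃ m : ℕ, c * Δ ^ m ∈ P) :
    ∀ x y : G, ∃ d : G, x * d⁻¹ ∈ P ∧ y * d⁻¹ ∈ P ∧
      ∀ c : G, x * c⁻¹ ∈ P → y * c⁻¹ ∈ P → d * c⁻¹ ∈ P := by
  intro x y
  obtain ⟨m₁, h₁⟩ := hpow x
  obtain ⟨m₂, h₂⟩ := hpow (y * Δ ^ m₁)
  have hxu : x * Δ ^ (m₁ + m₂) ∈ P := by
    have := mul_mem h₁ (pow_mem hΔP m₂)
    rwa [mul_assoc, ← pow_add] at this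
  have hyu : y * Δ ^ (m₁ + m₂) ∈ P := by
    rwa [mul_assoc, ← pow_add] at h₂
  obtain ⟨d₀, hd₀⟩ := hglbax ⟨_, hxu⟩ ⟨_, hyu⟩
  refine ⟨(d₀ : G) * (Δ ^ (m₁ + m₂))⁻¹, ?_, ?_, ?_⟩
  · obtain ⟨e, he⟩ := hd₀.1
    have he' : (e : G) * d₀ = x * Δ ^ (m₁ + m₂) := congrArg Subtype.val he
    have hd0 : (d₀ : G) = (e : G)⁻¹ * (x * Δ ^ (m₁ + m₂)) := by
      rw [eq_inv_mul_iff_mul_eq]; exact he'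
    have : x * ((d₀ : G) * (Δ ^ (m₁ + m₂))⁻¹)⁻¹ = (e : G) := by
      rw [hd0]; group
    rw [this]; exact e.2
  · obtain ⟨e, he⟩ := hd₀.2.1
    have he' : (e : G) * d₀ = y * Δ ^ (m₁ + m₂) := congrArg Subtype.val he
    have hd0 : (d₀ : G) = (e : G)⁻¹ * (y * Δ ^ (m₁ + m₂)) := by
      rw [eq_inv_mul_iff_mul_eq]; exact he'
    have : y * ((d₀ : G) * (Δ ^ (m₁ + m₂))⁻¹)⁻¹ = (e : G) := by
      rw [hd0]; group
    rw [this]; exact e.2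
  · intro c hxc hyc
    obtain ⟨m₃, h₃⟩ := hpow (c * Δ ^ (m₁ + m₂))
    have hxq : (x * Δ ^ (m₁ + m₂)) * Δ ^ m₃ * (c * Δ ^ (m₁ + m₂) * Δ ^ m₃)⁻¹ ∈ P := by
      have key : (x * Δ ^ (m₁ + m₂)) * Δ ^ m₃ * (c * Δ ^ (m₁ + m₂) * Δ ^ m₃)⁻¹ = x * c⁻¹ := by
        group
      rw [key]; exact hxc
    have hyq : (y * Δ ^ (m₁ + m₂)) * Δ ^ m₃ * (c * Δ ^ (m₁ + m₂) * Δ ^ m₃)⁻¹ ∈ P := by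
      have key : (y * Δ ^ (m₁ + m₂)) * Δ ^ m₃ * (c * Δ ^ (m₁ + m₂) * Δ ^ m₃)⁻¹ = y * c⁻¹ := by
        group
      rw [key]; exact hyc
    have hmain := gss_glb_bound hΔP hglbax m₃ ⟨_, hxu⟩ ⟨_, hyu⟩ d₀ hd₀ _ h₃ hxq hyq
    have key : (d₀ : G) * Δ ^ m₃ * (c * Δ ^ (m₁ + m₂) * Δ ^ m₃)⁻¹
        = ((d₀ : G) * (Δ ^ (m₁ + m₂))⁻¹) * c⁻¹ := by group
    rwa [key] at hmain

private lemma gss_exists_glb_list (hΔP : Δ ∈ P) (hglbax : ∀ a b : P, ∃ d, IsGlbR a b d)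
    (hpow : ∀ c : G, ∃ m : ℕ, c * Δ ^ m ∈ P) (x : G) (l : List G) :
    ∃ d : G, x * d⁻¹ ∈ P ∧ (∀ z ∈ l, z * d⁻¹ ∈ P) ∧
      ∀ c : G, x * c⁻¹ ∈ P → (∀ z ∈ l, z * c⁻¹ ∈ P) → d * c⁻¹ ∈ P := by
  have htr : ∀ a b c : G, a * b⁻¹ ∈ P → b * c⁻¹ ∈ P → a * c⁻¹ ∈ P := by
    intro a b c h1 h2
    have := mul_mem h1 h2
    rwa [show (a * b⁻¹) * (b * c⁻¹) = a * c⁻¹ by group] at this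
  induction l with
  | nil =>
    exact ⟨x, by simpa using one_mem P, by simp, fun c hc _ => hc⟩
  | cons y l ih =>
    obtain ⟨d', hd'x, hd'l, hd'glb⟩ := ih
    obtain ⟨d, hdd', hdy, hdglb⟩ := gss_exists_glbG hΔP hglbax hpow d' y
    refine ⟨d, htr _ _ _ hd'x hdd', ?_, ?_⟩
    · intro z hz
      rcases List.mem_cons.mp hz with h | h
      · subst h; exact hdy
      · exact htr _ _ _ (hd'l z h) hdd'
    · intro c hxc hlc
      refine hdglb c ?_ (hlc y List.mem_cons_self)
      exact hd'glb c hxc (fun z hz => hlc z (List.mem_cons_of_mem _ hz))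

lemma mem_GnPos {G : Type*} [Group G] {n : ℕ} {P : Submonoid G} {p : Gn G n} :
    p ∈ GnPos n P ↔ 0 ≤ p.k ∧ ∀ i, p.v i ∈ P := Iff.rfl

lemma Dn_zpow {G : Type*} [Group G] {n : ℕ} (Δ : G) (t : ℤ) :
    (Dn G n Δ) ^ t = Gn.mk t (fun _ => Δ ^ t) := by
  induction t using Int.induction_on with
  | zero =>
    rw [zpow_zero]
    show Gn.mk 0 (fun _ => (1 : G)) = _
    exact congrArg (Gn.mk 0) (funext fun _ => (zpow_zero Δ).symm)
  | succ i ih =>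
    rw [zpow_add_one, ih]
    show Gn.mk ((i : ℤ) + 1) (fun _ => Δ ^ (i : ℤ) * Δ) = _
    exact congrArg (Gn.mk ((i : ℤ) + 1)) (funext fun _ => (zpow_add_one Δ (i : ℤ)).symm)
  | pred i ih =>
    rw [zpow_sub_one, ih]
    show Gn.mk (-(i : ℤ) - 1) (fun _ => Δ ^ (-(i : ℤ)) * Δ⁻¹) = _
    exact congrArg (Gn.mk (-(i : ℤ) - 1)) (funext fun _ => (zpow_sub_one Δ (-(i : ℤ))).symm)

end SuperSummitHelpers

/-- **Corollary 5.3 (2).** If `g` is contained in its super summit set, then so is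
`α = δ^k(g,…,g) ∈ G(n)`. -/
theorem gn_super_summit {G : Type*} [Group G] (P : Submonoid G) (Δ : G)
    (hG : IsGarsideGroup P Δ)
    (n : ℕ) (hn : 1 ≤ n) (k : ℤ) (g : G)
    (hss : ∀ h : G, IsConj g h → ∀ t : ℤ,
      (gdvdL P (Δ ^ t) h → gdvdL P (Δ ^ t) g) ∧
      (gdvdL P h (Δ ^ t) → gdvdL P g (Δ ^ t))) :
    ∀ β : Gn G n, IsConj (Gn.mk k (fun _ => g)) β → ∀ t : ℤ,
      (gdvdL (GnPos n P) (Dn G n Δ ^ t) β →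
        gdvdL (GnPos n P) (Dn G n Δ ^ t) (Gn.mk k (fun _ => g))) ∧
      (gdvdL (GnPos n P) β (Dn G n Δ ^ t) →
        gdvdL (GnPos n P) (Gn.mk k (fun _ => g)) (Dn G n Δ ^ t)) := by
  intro beta hconj t
  obtain ⟨hmon, hfrac, hΔP, hGar⟩ := hG
  have hglbax : ∀ a b : P, ∃ d, IsGlbR a b d := hmon.2.2.2.2.2.2.1
  have hconjP : ∀ (s : ℤ) (a : G), a ∈ P → Δ ^ s * a * (Δ ^ s)⁻¹ ∈ P :=
    gss_conjP hΔP hGar.1 hGar.2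
  have hpow : ∀ c : G, ∃ m : ℕ, c * Δ ^ m ∈ P :=
    gss_mul_pow_mem hΔP hfrac hconjP hGar.2
  haveI : NeZero n := ⟨by omega⟩
  obtain ⟨γ, hγ0⟩ := isConj_iff.mp hconj
  have hγ : γ * (Gn.mk k (fun _ => g)) = beta * γ := by rw [← hγ0]; group
  have hkk : γ.k + k = beta.k + γ.k := congrArg Gn.k hγ
  have hk : beta.k = k := by omega
  have hv : ∀ i : ZMod n,
      γ.v (i - (k : ZMod n)) * g = beta.v (i - (γ.k : ZMod n)) * γ.v i :=
    fun i => congrArg (fun p => p.v i) hγ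
  have hβv : ∀ j : ZMod n,
      beta.v j = γ.v (j + (γ.k : ZMod n) - (k : ZMod n)) * g
        * (γ.v (j + (γ.k : ZMod n)))⁻¹ := by
    intro j
    have h := hv (j + (γ.k : ZMod n))
    rw [add_sub_cancel_right] at h
    rw [eq_mul_inv_iff_mul_eq]
    exact h.symm
  obtain ⟨d, hdx, hdl, hdglb0⟩ :=
    gss_exists_glb_list hΔP hglbax hpow (γ.v 0)
      ((Finset.univ : Finset (ZMod n)).toList.map γ.v)
  have hd1 : ∀ i : ZMod n, γ.v i * d⁻¹ ∈ P := fun i =>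
    hdl _ (List.mem_map.mpr ⟨i, Finset.mem_toList.mpr (Finset.mem_univ i), rfl⟩)
  have hd2 : ∀ c : G, (∀ i : ZMod n, γ.v i * c⁻¹ ∈ P) → d * c⁻¹ ∈ P := by
    intro c hc
    refine hdglb0 c (hc 0) ?_
    intro z hz
    obtain ⟨i, -, rfl⟩ := List.mem_map.mp hz
    exact hc i
  have hconjd : IsConj g (d * g * d⁻¹) := isConj_iff.mpr ⟨d, rfl⟩
  constructor
  · intro hβ
    have hβ' : ((Gn.mk t (fun _ => Δ ^ t) : Gn G n))⁻¹ * beta ∈ GnPos n P := by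
      have h0 : (Dn G n Δ ^ t)⁻¹ * beta ∈ GnPos n P := hβ
      rwa [Dn_zpow] at h0
    obtain ⟨hβ1, hβ2⟩ := mem_GnPos.mp hβ'
    have hβ1' : (0 : ℤ) ≤ -t + beta.k := hβ1
    have hβ2' : ∀ i : ZMod n, (Δ ^ t)⁻¹ * beta.v i ∈ P := fun i => hβ2 i
    have hA : ∀ j : ZMod n, (Δ ^ t)⁻¹ * (γ.v j * g) * d⁻¹ ∈ P := by
      intro j
      have h2 := hβ2' (j + (k : ZMod n) - (γ.k : ZMod n))
      rw [hβv (j + (k : ZMod n) - (γ.k : ZMod n)),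
        show (j + (k : ZMod n) - (γ.k : ZMod n)) + (γ.k : ZMod n) - (k : ZMod n) = j by ring,
        show (j + (k : ZMod n) - (γ.k : ZMod n)) + (γ.k : ZMod n) = j + (k : ZMod n) by ring]
        at h2
      have h3 := mul_mem h2 (hd1 (j + (k : ZMod n)))
      rwa [show ((Δ ^ t)⁻¹ * (γ.v j * g * (γ.v (j + (k : ZMod n)))⁻¹))
          * (γ.v (j + (k : ZMod n)) * d⁻¹) = (Δ ^ t)⁻¹ * (γ.v j * g) * d⁻¹ by group] at h3
    have hC : ∀ j : ZMod n, γ.v j * (Δ ^ t * d * g⁻¹)⁻¹ ∈ P := by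
      intro j
      have h4 := hconjP t _ (hA j)
      rwa [show Δ ^ t * ((Δ ^ t)⁻¹ * (γ.v j * g) * d⁻¹) * (Δ ^ t)⁻¹
          = γ.v j * (Δ ^ t * d * g⁻¹)⁻¹ by group] at h4
    have hD : d * (Δ ^ t * d * g⁻¹)⁻¹ ∈ P := hd2 _ hC
    have hE : (Δ ^ t)⁻¹ * (d * g * d⁻¹) ∈ P := by
      have h5 := hconjP (-t) _ hD
      rwa [show Δ ^ (-t) * (d * (Δ ^ t * d * g⁻¹)⁻¹) * (Δ ^ (-t))⁻¹
          = (Δ ^ t)⁻¹ * (d * g * d⁻¹) by group] at h5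
    have hF : (Δ ^ t)⁻¹ * g ∈ P := (hss _ hconjd t).1 hE
    show (Dn G n Δ ^ t)⁻¹ * Gn.mk k (fun _ => g) ∈ GnPos n P
    rw [Dn_zpow]
    refine mem_GnPos.mpr ⟨?_, fun i => ?_⟩
    · show (0 : ℤ) ≤ -t + k
      omega
    · show (Δ ^ t)⁻¹ * g ∈ P
      exact hF
  · intro hβ
    have hβ' : beta⁻¹ * (Gn.mk t (fun _ => Δ ^ t) : Gn G n) ∈ GnPos n P := by
      have h0 : beta⁻¹ * Dn G n Δ ^ t ∈ GnPos n P := hβ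
      rwa [Dn_zpow] at h0
    obtain ⟨hβ1, hβ2⟩ := mem_GnPos.mp hβ'
    have hβ1' : (0 : ℤ) ≤ -beta.k + t := hβ1
    have hβ2' : ∀ j : ZMod n, (beta.v j)⁻¹ * Δ ^ t ∈ P := by
      intro j
      have h : (beta.v ((j + (t : ZMod n) - (beta.k : ZMod n)) - (t : ZMod n)
          + (beta.k : ZMod n)))⁻¹ * Δ ^ t ∈ P :=
        hβ2 (j + (t : ZMod n) - (beta.k : ZMod n))
      rwa [show (j + (t : ZMod n) - (beta.k : ZMod n)) - (t : ZMod n)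
          + (beta.k : ZMod n) = j by ring] at h
    have hA : ∀ i : ZMod n, γ.v (i + (k : ZMod n)) * g⁻¹ * (γ.v i)⁻¹ * Δ ^ t ∈ P := by
      intro i
      have h := hβ2' (i + (k : ZMod n) - (γ.k : ZMod n))
      rw [hβv (i + (k : ZMod n) - (γ.k : ZMod n)),
        show (i + (k : ZMod n) - (γ.k : ZMod n)) + (γ.k : ZMod n) - (k : ZMod n) = i by ring,
        show (i + (k : ZMod n) - (γ.k : ZMod n)) + (γ.k : ZMod n) = i + (k : ZMod n) by ring]
        at h
      rwa [show (γ.v i * g * (γ.v (i + (k : ZMod n)))⁻¹)⁻¹ * Δ ^ t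
          = γ.v (i + (k : ZMod n)) * g⁻¹ * (γ.v i)⁻¹ * Δ ^ t by group] at h
    have hB : ∀ j : ZMod n, γ.v j * ((Δ ^ t)⁻¹ * d * g)⁻¹ ∈ P := by
      intro j
      have h1 := hA (j - (k : ZMod n))
      rw [show (j - (k : ZMod n)) + (k : ZMod n) = j by ring] at h1
      have h2 := hconjP (-t) _ (hd1 (j - (k : ZMod n)))
      have h3 := mul_mem h1 h2
      rwa [show (γ.v j * g⁻¹ * (γ.v (j - (k : ZMod n)))⁻¹ * Δ ^ t)
          * (Δ ^ (-t) * (γ.v (j - (k : ZMod n)) * d⁻¹) * (Δ ^ (-t))⁻¹)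
          = γ.v j * ((Δ ^ t)⁻¹ * d * g)⁻¹ by group] at h3
    have hD : d * ((Δ ^ t)⁻¹ * d * g)⁻¹ ∈ P := hd2 _ hB
    have hE : (d * g * d⁻¹)⁻¹ * Δ ^ t ∈ P := by
      rwa [show d * ((Δ ^ t)⁻¹ * d * g)⁻¹ = (d * g * d⁻¹)⁻¹ * Δ ^ t by group] at hD
    have hF : g⁻¹ * Δ ^ t ∈ P := (hss _ hconjd t).2 hE
    show (Gn.mk k (fun _ => g) : Gn G n)⁻¹ * Dn G n Δ ^ t ∈ GnPos n P
    rw [Dn_zpow]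
    refine mem_GnPos.mpr ⟨?_, fun i => ?_⟩
    · show (0 : ℤ) ≤ -k + t
      omega
    · show g⁻¹ * Δ ^ t ∈ P
      exact hF
end
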